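/- For every path p = (i, s) and every n ≥ 1, |X_{n+1}(p) − X_n(p)| = Φ(p̂^{n+1}) / 2, where p̂^{n+1} := (i, [s 0, …, s (n−2), ¬ s (n−1)]) is the sibling of p^{n+1}; consequently (X_n(p))_{n ≥ 1} is a Cauchy sequence and converges to a limit X_∞(p). -/

import Mathlib

noncomputable section
open Filter Topology Classical

/-- Lexicographic strict order on positive edges (compared within a sphere `S(n)`). -/
def EdgeLt {N : ℕ} (e f : Fin N × List Bool) : Prop :=
  e.1 < f.1 ∨ (e.1 = f.1 ∧ List.Lex (· < ·) e.2 f.2)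

lemma ofFn_snoc_eq {m : ℕ} (v : Fin m → Bool) (b : Bool) :
    List.ofFn (Fin.snoc v b : Fin (m+1) → Bool) = List.ofFn v ++ [b] := by
  rw [List.ofFn_succ']
  simp [Fin.snoc_castSucc, Fin.snoc_last, List.concat_eq_append]

lemma lex_irrefl (l : List Bool) : ¬ List.Lex (· < ·) l l := fun h =>
  (List.Lex.to_ne (List.Lex.imp (fun a b h => ne_of_lt h) _ _ h)) rfl

lemma lex_snoc : ∀ {l₁ l₂ : List Bool}, l₁.length = l₂.length → ∀ (a b : Bool),
    (List.Lex (· < ·) (l₁ ++ [a]) (l₂ ++ [b]) ↔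
      List.Lex (· < ·) l₁ l₂ ∨ (l₁ = l₂ ∧ a < b)) := by
  intro l₁
  induction l₁ with
  | nil =>
    intro l₂ h a b
    cases l₂ with
    | nil =>
      simp [List.lex_singleton_iff, List.not_lex_nil]
    | cons y l₂ => simp at h
  | cons x l₁ ih =>
    intro l₂ h a b
    cases l₂ with
    | nil => simp at h
    | cons y l₂ =>
      simp only [List.length_cons, add_left_inj] at h
      rcases lt_trichotomy x y with hxy | rfl | hxy
      · exact iff_of_true (List.Lex.rel hxy) (Or.inl (List.Lex.rel hxy))
      · simp only [List.cons_append]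
        rw [List.lex_cons_iff, List.lex_cons_iff, ih h a b]
        simp [List.cons_eq_cons]
      · refine iff_of_false ?_ ?_
        · intro h'
          cases h' with
          | rel h'' => exact absurd h'' hxy.asymm
          | cons h'' => exact lt_irrefl _ hxy
        · rintro (h' | ⟨h', -⟩)
          · cases h' with
            | rel h'' => exact absurd h'' hxy.asymm
            | cons h'' => exact lt_irrefl _ hxy
          · rw [List.cons_eq_cons] at h'
            exact absurd h'.1 hxy.ne'

def snocEquiv (N m : ℕ) : (Fin N × (Fin m → Bool)) × Bool ≃ Fin N × (Fin (m+1) → Bool) where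
  toFun z := (z.1.1, Fin.snoc z.1.2 z.2)
  invFun x := ((x.1, Fin.init x.2), x.2 (Fin.last m))
  left_inv z := by simp [Fin.init_snoc, Fin.snoc_last]
  right_inv x := by simp [Fin.snoc_init_self]

lemma sum_reindex {N m : ℕ} (F : Fin N × (Fin (m+1) → Bool) → ℝ) :
    ∑ x, F x = ∑ y : Fin N × (Fin m → Bool),
      (F (y.1, Fin.snoc y.2 false) + F (y.1, Fin.snoc y.2 true)) := by
  rw [← (snocEquiv N m).sum_comp F, Fintype.sum_prod_type]
  refine Finset.sum_congr rfl fun y _ => ?_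
  simp [snocEquiv, Fintype.sum_bool, add_comm]

lemma S_step {N : ℕ} (Φ : Fin N → List Bool → ℝ)
    (hharm : ∀ (i : Fin N) (w : List Bool), Φ i w = Φ i (w ++ [false]) + Φ i (w ++ [true]))
    (i : Fin N) {m : ℕ} (v : Fin m → Bool) (b : Bool) :
    (∑ x : Fin N × (Fin (m+1) → Bool),
        if EdgeLt (x.1, List.ofFn x.2) (i, List.ofFn (Fin.snoc v b : Fin (m+1) → Bool))
        then Φ x.1 (List.ofFn x.2) else 0)
      = (∑ x : Fin N × (Fin m → Bool),
          if EdgeLt (x.1, List.ofFn x.2) (i, List.ofFn v) then Φ x.1 (List.ofFn x.2) else 0)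
        + (if b then Φ i (List.ofFn v ++ [false]) else 0) := by
  rw [sum_reindex (fun x => if EdgeLt (x.1, List.ofFn x.2)
      (i, List.ofFn (Fin.snoc v b : Fin (m+1) → Bool)) then Φ x.1 (List.ofFn x.2) else 0)]
  have key : ∀ y : Fin N × (Fin m → Bool),
      ((if EdgeLt (y.1, List.ofFn (Fin.snoc y.2 false : Fin (m+1) → Bool))
          (i, List.ofFn (Fin.snoc v b : Fin (m+1) → Bool))
        then Φ y.1 (List.ofFn (Fin.snoc y.2 false : Fin (m+1) → Bool)) else 0)
       + (if EdgeLt (y.1, List.ofFn (Fin.snoc y.2 true : Fin (m+1) → Bool))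
          (i, List.ofFn (Fin.snoc v b : Fin (m+1) → Bool))
        then Φ y.1 (List.ofFn (Fin.snoc y.2 true : Fin (m+1) → Bool)) else 0))
      = (if EdgeLt (y.1, List.ofFn y.2) (i, List.ofFn v) then Φ y.1 (List.ofFn y.2) else 0)
        + (if y = (i, v) ∧ b = true then Φ i (List.ofFn v ++ [false]) else 0) := by
    rintro ⟨j, u⟩
    simp only [EdgeLt.eq_1, ofFn_snoc_eq]
    have hlex : ∀ c : Bool, List.Lex (· < ·) (List.ofFn u ++ [c]) (List.ofFn v ++ [b]) ↔
        List.Lex (· < ·) (List.ofFn u) (List.ofFn v) ∨ (List.ofFn u = List.ofFn v ∧ c < b) :=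
      fun c => lex_snoc (by simp) c b
    rcases lt_trichotomy j i with hj | rfl | hj
    · rw [if_pos (Or.inl hj), if_pos (Or.inl hj), if_pos (Or.inl hj),
        if_neg (by rintro ⟨h1, -⟩; exact hj.ne (congrArg Prod.fst h1)),
        ← hharm, add_zero]
    · by_cases hu : u = v
      · subst hu
        have h1 : ¬ (j < j ∨ j = j ∧ List.Lex (· < ·) (List.ofFn u) (List.ofFn u)) := by
          rintro (h | ⟨-, h⟩)
          · exact lt_irrefl _ h
          · exact lex_irrefl _ h
        rw [if_neg h1]
        cases b with
        | false =>
          rw [if_neg, if_neg, if_neg] <;>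
            simp_all [hlex, lex_irrefl (List.ofFn u)]
        | true =>
          rw [if_pos (Or.inr ⟨rfl, (hlex false).2 (Or.inr ⟨rfl, by simp⟩)⟩),
            if_neg (by rintro (h | ⟨-, h⟩); · exact lt_irrefl _ h
                       · rw [hlex true] at h
                         rcases h with h | ⟨-, h⟩
                         · exact lex_irrefl _ h
                         · simp at h),
            if_pos ⟨rfl, rfl⟩, add_zero, zero_add]
      · have hne : List.ofFn u ≠ List.ofFn v := fun h => hu (List.ofFn_inj.1 h)
        by_cases hL : List.Lex (· < ·) (List.ofFn u) (List.ofFn v)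
        · rw [if_pos (Or.inr ⟨rfl, (hlex false).2 (Or.inl hL)⟩),
            if_pos (Or.inr ⟨rfl, (hlex true).2 (Or.inl hL)⟩),
            if_pos (Or.inr ⟨rfl, hL⟩),
            if_neg (by rintro ⟨h1, -⟩; exact hu (congrArg Prod.snd h1)),
            ← hharm, add_zero]
        · have hcond : ∀ c : Bool,
              ¬ (j < j ∨ j = j ∧ List.Lex (· < ·) (List.ofFn u ++ [c]) (List.ofFn v ++ [b])) := by
            rintro c (h | ⟨-, h⟩)
            · exact lt_irrefl _ h
            · rw [hlex c] at h
              rcases h with h | ⟨h, -⟩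
              · exact hL h
              · exact hne h
          rw [if_neg (hcond false), if_neg (hcond true),
            if_neg (by rintro (h | ⟨-, h⟩)
                       exacts [lt_irrefl _ h, hL h]),
            if_neg (by rintro ⟨h1, -⟩; exact hu (congrArg Prod.snd h1))]
    · have hcond : ∀ w w', ¬ (j < i ∨ j = i ∧ List.Lex (· < ·) (w : List Bool) (w' : List Bool)) := by
        rintro w w' (h | ⟨h, -⟩)
        · exact lt_asymm hj h
        · exact hj.ne' h
      rw [if_neg (hcond _ _), if_neg (hcond _ _), if_neg (hcond _ _),
        if_neg (by rintro ⟨h1, -⟩; exact hj.ne' (congrArg Prod.fst h1))]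
  rw [Finset.sum_congr rfl (fun y _ => key y), Finset.sum_add_distrib]
  congr 1
  cases b with
  | false => simp
  | true => simp [Finset.sum_ite_eq' Finset.univ ((i, v) : Fin N × (Fin m → Bool))]

lemma Tot_step {N : ℕ} (Φ : Fin N → List Bool → ℝ)
    (hharm : ∀ (i : Fin N) (w : List Bool), Φ i w = Φ i (w ++ [false]) + Φ i (w ++ [true]))
    {m : ℕ} :
    (∑ x : Fin N × (Fin (m+1) → Bool), Φ x.1 (List.ofFn x.2))
      = ∑ x : Fin N × (Fin m → Bool), Φ x.1 (List.ofFn x.2) := by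
  rw [sum_reindex (fun x => Φ x.1 (List.ofFn x.2))]
  exact Finset.sum_congr rfl fun y _ => by
    simp only [ofFn_snoc_eq]; exact (hharm _ _).symm

/-- `Y (i, v)` for an edge of `S (m+1)`: `Y_n(e) = Φ(e)/2 + ∑_{f ∈ S(n), f < e} Φ(f)`. -/
def Y {N : ℕ} (Φ : Fin N → List Bool → ℝ) (m : ℕ) (i : Fin N) (v : Fin m → Bool) : ℝ :=
  Φ i (List.ofFn v) / 2 +
    ∑ x : Fin N × (Fin m → Bool),
      if EdgeLt (x.1, List.ofFn x.2) (i, List.ofFn v) then Φ x.1 (List.ofFn x.2) else 0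

/-- `X_n(p) = Y_n(p^n)`; here `m = n - 1` is the word length of the `n`-th edge. -/
def X {N : ℕ} (Φ : Fin N → List Bool → ℝ) (m : ℕ) (p : Fin N × (ℕ → Bool)) : ℝ :=
  Y Φ m p.1 (fun k => p.2 k.val)

/-- The word `[s 0, …, s (m-1)]` of length `m`. -/
def word (s : ℕ → Bool) (m : ℕ) : List Bool := List.ofFn (fun k : Fin m => s k.val)

/-- **Convergence of `X_n`.** For every path `p = (i, s)` and every `n ≥ 1`
(writing `n = m + 1`), `|X_{n+1}(p) − X_n(p)| = Φ(p̂^{n+1}) / 2`, where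
`p̂^{n+1} = (i, [s 0, …, s (n-2), ¬ s (n-1)]) = (i, word s m ++ [!s m])` is the sibling
of `p^{n+1}`; consequently `(X_n(p))` is a Cauchy sequence and converges to a limit. -/
theorem X_cauchy_converges (N : ℕ) (hN : 1 ≤ N) (Φ : Fin N → List Bool → ℝ)
    (hpos : ∀ (i : Fin N) (w : List Bool), 0 < Φ i w)
    (hharm : ∀ (i : Fin N) (w : List Bool), Φ i w = Φ i (w ++ [false]) + Φ i (w ++ [true]))
    (i : Fin N) (s : ℕ → Bool) :
    (∀ m : ℕ, |X Φ (m + 1) (i, s) - X Φ m (i, s)| = Φ i (word s m ++ [!s m]) / 2) ∧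
    CauchySeq (fun m => X Φ m (i, s)) ∧
    ∃ L : ℝ, Tendsto (fun m => X Φ m (i, s)) atTop (nhds L) := by
  have hfun : ∀ m : ℕ, (fun k : Fin (m+1) => s k.val)
      = Fin.snoc (fun k : Fin m => s k.val) (s m) := by
    intro m
    funext k
    refine Fin.lastCases ?_ ?_ k
    · simp [Fin.snoc_last]
    · intro j
      simp [Fin.snoc_castSucc]
  have hword : ∀ m : ℕ, word s (m+1) = word s m ++ [s m] := by
    intro m
    show List.ofFn (fun k : Fin (m+1) => s k.val) = _
    rw [hfun m, ofFn_snoc_eq]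
    rfl
  set Sm : ℕ → ℝ := fun m => ∑ x : Fin N × (Fin m → Bool),
      if EdgeLt (x.1, List.ofFn x.2) (i, word s m) then Φ x.1 (List.ofFn x.2) else 0 with hSm
  have hX : ∀ m : ℕ, X Φ m (i, s) = Φ i (word s m) / 2 + Sm m := fun m => rfl
  have hS : ∀ m : ℕ, Sm (m+1) = Sm m + (if s m then Φ i (word s m ++ [false]) else 0) := by
    intro m
    have h := S_step Φ hharm i (fun k : Fin m => s k.val) (s m)
    simp only [hSm]
    show (∑ x : Fin N × (Fin (m+1) → Bool),
        if EdgeLt (x.1, List.ofFn x.2) (i, List.ofFn (fun k : Fin (m+1) => s k.val))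
        then Φ x.1 (List.ofFn x.2) else 0) = _
    rw [hfun m, h]
    rfl
  have h1 : ∀ m : ℕ, |X Φ (m + 1) (i, s) - X Φ m (i, s)| = Φ i (word s m ++ [!s m]) / 2 := by
    intro m
    rw [hX, hX, hS m, hword m]
    have hp0 := hpos i (word s m ++ [false])
    have hp1 := hpos i (word s m ++ [true])
    have hh := hharm i (word s m)
    cases hsm : s m with
    | false =>
      rw [if_neg (by simp), Bool.not_false, add_zero, abs_of_nonpos (by linarith)]
      linarith
    | true =>
      rw [if_pos rfl, Bool.not_true, abs_of_nonneg (by linarith)]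
      linarith
  have hA : Antitone (fun m => Φ i (word s m)) := by
    apply antitone_nat_of_succ_le
    intro m
    have hp0 := hpos i (word s m ++ [false])
    have hp1 := hpos i (word s m ++ [true])
    have hh := hharm i (word s m)
    rw [hword m]
    cases s m <;> simp <;> linarith
  have hAt : Tendsto (fun m => Φ i (word s m)) atTop (nhds (⨅ m, Φ i (word s m))) := by
    apply tendsto_atTop_ciInf hA
    exact ⟨0, by rintro x ⟨m, rfl⟩; exact (hpos i (word s m)).le⟩
  have hM : Monotone Sm := by
    apply monotone_nat_of_le_succ
    intro m
    rw [hS m]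
    have : (0:ℝ) ≤ if s m then Φ i (word s m ++ [false]) else 0 := by
      split
      · exact (hpos _ _).le
      · exact le_rfl
    linarith
  have hTot : ∀ m : ℕ, (∑ x : Fin N × (Fin m → Bool), Φ x.1 (List.ofFn x.2))
      = ∑ x : Fin N × (Fin 0 → Bool), Φ x.1 (List.ofFn x.2) := by
    intro m
    induction m with
    | zero => rfl
    | succ m ih => rw [Tot_step Φ hharm, ih]
  have hSb : ∀ m : ℕ, Sm m ≤ ∑ x : Fin N × (Fin 0 → Bool), Φ x.1 (List.ofFn x.2) := by
    intro m
    rw [← hTot m]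
    apply Finset.sum_le_sum
    intro x _
    split
    · exact le_rfl
    · exact (hpos _ _).le
  have hMt : Tendsto Sm atTop (nhds (⨆ m, Sm m)) := by
    apply tendsto_atTop_ciSup hM
    exact ⟨_, by rintro x ⟨m, rfl⟩; exact hSb m⟩
  have hXt : Tendsto (fun m => X Φ m (i, s)) atTop
      (nhds ((⨅ m, Φ i (word s m)) / 2 + ⨆ m, Sm m)) := by
    simp only [hX]
    exact (hAt.div_const 2).add hMt
  exact ⟨h1, hXt.cauchySeq, ⟨_, hXt⟩⟩
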